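/- Let a and r be positive integers such that a + 1 is not a power of 2 and r is odd. Assume there exists a positive integer τ such that a^{2^τ} − 1 is divisible by two distinct primes p₀ and p_τ, neither of which divides a^{2^m} − 1 for any m ∈ [0, τ−1]. Then there exist infinitely many positive integers k such that C(k, r) is an a-Riesel number: gcd(C(k,r) − 1, a − 1) = 1, C(k, r) is not a power of a, and C(k, r) · a^n − 1 is composite for all positive integers n. -/

import Mathlib

open Polynomial Nat

-- eval of descPochhammer at -1
lemma eval_descPochhammer_neg_one (R : Type*) [CommRing R] (r : ℕ) :
    (descPochhammer R r).eval (-1 : R) = (-1) ^ r * (r ! : R) := by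
  induction r with
  | zero => simp
  | succ n ih =>
    rw [descPochhammer_succ_eval, ih, Nat.factorial_succ]
    push_cast
    ring

-- key congruence lemma
lemma key_cong (q r B k : ℕ) (hq : q.Prime) (hB : r ! < q ^ B) (c : ℤ)
    (h : ((k.descFactorial r : ℤ) : ZMod (q ^ (B+1))) = ((c * (r ! : ℤ)) : ZMod (q ^ (B+1)))) :
    (k.choose r : ℤ) ≡ c [ZMOD (q : ℤ)] := by
  have hdvd : ((q : ℤ) ^ (B+1)) ∣ (c * (r ! : ℤ) - (k.descFactorial r : ℤ)) := by
    have h' : (((k.descFactorial r : ℤ)) : ZMod (q ^ (B+1))) = (((c * (r ! : ℤ)) : ℤ) : ZMod (q ^ (B+1))) := by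
      push_cast at h ⊢; exact h
    have h2 := ((ZMod.intCast_eq_intCast_iff _ _ _).mp h').dvd
    push_cast at h2 ⊢
    exact h2
  have hdesc : (k.descFactorial r : ℤ) = (r ! : ℤ) * (k.choose r : ℤ) := by
    rw_mod_cast [Nat.descFactorial_eq_factorial_mul_choose]
  set e := (r !).factorization q with he
  set u := ordCompl[q] (r !) with hu
  have hfac : q ^ e * u = r ! := Nat.ordProj_mul_ordCompl_eq_self (r !) q
  have hqu : ¬ q ∣ u := Nat.not_dvd_ordCompl hq (Nat.factorial_ne_zero r)
  have heB : e < B := by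
    have h1 : q ^ e ≤ r ! := le_of_dvd (Nat.factorial_pos r) (Nat.ordProj_dvd _ _)
    have := lt_of_le_of_lt h1 hB
    exact (Nat.pow_lt_pow_iff_right hq.one_lt).mp this
  -- q^(B+1) ∣ q^e * (u * (c - choose))
  have hdvd2 : ((q:ℤ)) ^ (B+1) ∣ (q : ℤ)^e * ((u : ℤ) * ((c - (k.choose r : ℤ)))) := by
    have : c * (r ! : ℤ) - (k.descFactorial r : ℤ) = (q:ℤ)^e * ((u:ℤ) * (c - (k.choose r : ℤ))) := by
      rw [hdesc]
      have : ((r ! : ℕ) : ℤ) = (q:ℤ)^e * (u:ℤ) := by exact_mod_cast congrArg (Nat.cast : ℕ → ℤ) hfac.symm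
      rw [this]; ring
    rwa [this] at hdvd
  have hdvd3 : ((q:ℤ)) ^ (B+1-e) ∣ (u : ℤ) * (c - (k.choose r : ℤ)) := by
    have hsplit : ((q:ℤ)) ^ (B+1) = (q:ℤ)^e * (q:ℤ)^(B+1-e) := by
      rw [← pow_add]; congr 1; omega
    rw [hsplit] at hdvd2
    exact (mul_dvd_mul_iff_left (pow_ne_zero e (by exact_mod_cast hq.ne_zero))).mp hdvd2
  have hqd : (q:ℤ) ∣ (u : ℤ) * (c - (k.choose r : ℤ)) :=
    dvd_trans (dvd_pow_self (q:ℤ) (by omega)) hdvd3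
  have hqprime : Prime (q : ℤ) := Nat.prime_iff_prime_int.mp hq
  rcases hqprime.dvd_mul.mp hqd with h1 | h1
  · exact absurd (Int.ofNat_dvd.mp (by exact_mod_cast h1)) hqu
  · exact (Int.modEq_iff_dvd.mpr h1)

lemma desc_cast (N r k : ℕ) :
    ((k.descFactorial r : ℤ) : ZMod N) = (descPochhammer (ZMod N) r).eval ((k : ℕ) : ZMod N) := by
  rw [descPochhammer_eval_eq_descFactorial]
  push_cast
  ring

lemma rfact_lt (q r : ℕ) (hq : q.Prime) : r ! < q ^ (r !) :=
  lt_of_lt_of_le Nat.lt_two_pow_self (Nat.pow_le_pow_left hq.two_le _)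

-- Corollary A : k ≡ -1 mod q^(r!+1)  ⇒  choose k r ≡ -1 mod q  (r odd)
lemma chooseA (q r k : ℕ) (hq : q.Prime) (hodd : Odd r)
    (hk : ((k : ℕ) : ZMod (q ^ (r ! + 1))) = -1) :
    (k.choose r : ℤ) ≡ -1 [ZMOD (q : ℤ)] := by
  apply key_cong q r (r !) k hq (rfact_lt q r hq)
  rw [desc_cast, hk, eval_descPochhammer_neg_one, hodd.neg_one_pow]
  push_cast
  ring

-- Corollary B : k ≡ r mod q^(r!+1)  ⇒  choose k r ≡ 1 mod q
lemma chooseB (q r k : ℕ) (hq : q.Prime)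
    (hk : ((k : ℕ) : ZMod (q ^ (r ! + 1))) = ((r : ℕ) : ZMod (q ^ (r ! + 1)))) :
    (k.choose r : ℤ) ≡ 1 [ZMOD (q : ℤ)] := by
  apply key_cong q r (r !) k hq (rfact_lt q r hq)
  rw [desc_cast, hk, descPochhammer_eval_eq_descFactorial, Nat.descFactorial_self]
  push_cast
  ring

-- Corollary C : k ≡ 0 mod q^(r!+1), 0 < r  ⇒  choose k r ≡ 0 mod q
lemma chooseC (q r k : ℕ) (hq : q.Prime) (hr : 0 < r)
    (hk : ((k : ℕ) : ZMod (q ^ (r ! + 1))) = 0) :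
    (k.choose r : ℤ) ≡ 0 [ZMOD (q : ℤ)] := by
  apply key_cong q r (r !) k hq (rfact_lt q r hq)
  rw [desc_cast, hk]
  have : ((0:ℕ) : ZMod (q ^ (r ! + 1))) = 0 := by push_cast; ring
  rw [← this, descPochhammer_eval_eq_descFactorial]
  obtain ⟨r', rfl⟩ := Nat.exists_eq_succ_of_ne_zero hr.ne'
  rw [Nat.zero_descFactorial_succ]
  push_cast
  ring

lemma succ_dvd_sq_sub_one (x : ℕ) : (x + 1) ∣ x ^ 2 - 1 := by
  rcases x with _ | y
  · simp
  · refine ⟨y, ?_⟩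
    have h1 : (y + 1) ^ 2 = (y + 1 + 1) * y + 1 := by ring
    omega

lemma pow_two_pow_succ (a m : ℕ) : a ^ (2 ^ (m + 1)) = (a ^ (2 ^ m)) ^ 2 := by
  rw [← pow_mul, ← pow_succ]

lemma odd_prime_factor (a j : ℕ) (ha : 2 ≤ a) (ha2 : ¬∃ s : ℕ, a + 1 = 2 ^ s) :
    ∃ q : ℕ, q.Prime ∧ Odd q ∧ q ∣ a ^ (2 ^ j) + 1 := by
  set m := a ^ (2 ^ j) + 1 with hm
  have hx2 : 2 ≤ a ^ (2 ^ j) := le_trans ha (Nat.le_self_pow (by positivity) a)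
  have hm3 : 3 ≤ m := by omega
  set U := ordCompl[2] m with hU
  have hmne : m ≠ 0 := by omega
  have hfac : 2 ^ (m.factorization 2) * U = m := Nat.ordProj_mul_ordCompl_eq_self m 2
  have h2U : ¬ 2 ∣ U := Nat.not_dvd_ordCompl Nat.prime_two hmne
  rcases eq_or_ne U 1 with hU1 | hU1
  · -- m is a power of 2 : contradiction
    exfalso
    have hpow : m = 2 ^ (m.factorization 2) := by rw [hU1, mul_one] at hfac; omega
    rcases Nat.even_or_odd a with hae | hao
    · -- a even ⇒ m odd ≥ 3, can't be a power of 2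
      have : 2 ∣ a ^ (2 ^ j) := dvd_pow (even_iff_two_dvd.mp hae) (by positivity)
      have hmodd : ¬ 2 ∣ m := by omega
      have hz : m.factorization 2 = 0 := by
        by_contra hne
        exact hmodd (hpow ▸ dvd_pow_self 2 hne)
      rw [hz, pow_zero] at hpow
      omega
    · rcases Nat.eq_zero_or_pos j with rfl | hj
      · exact ha2 ⟨m.factorization 2, by rw [← hpow, hm]; norm_num⟩
      · -- j ≥ 1, a odd : a^(2^j) ≡ 1 mod 4, m ≡ 2 mod 4
        obtain ⟨j', rfl⟩ := Nat.exists_eq_succ_of_ne_zero hj.ne'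
        set b := a ^ (2 ^ j') with hb
        have hbo : Odd b := hao.pow
        obtain ⟨c, hc⟩ := hbo
        have hx : a ^ (2 ^ (j' + 1)) = b ^ 2 := pow_two_pow_succ a j'
        have hb2 : b ^ 2 = 4 * (c * c + c) + 1 := by rw [hc]; ring
        have hm' : m = b ^ 2 + 1 := by rw [hm, Nat.succ_eq_add_one, pow_two_pow_succ]
        have hm4 : m % 4 = 2 := by omega
        have hv : 2 ≤ m.factorization 2 := by
          by_contra hlt
          push_neg at hlt
          interval_cases h : m.factorization 2 <;> omega
        have h4 : 4 ∣ m := by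
          rw [hpow]
          exact dvd_trans (by norm_num) (pow_dvd_pow 2 hv)
        omega
  · -- U has an odd prime factor
    refine ⟨U.minFac, Nat.minFac_prime hU1, ?_, ?_⟩
    · have hne2 : U.minFac ≠ 2 := fun h => h2U (h ▸ U.minFac_dvd)
      exact (Nat.minFac_prime hU1).odd_of_ne_two hne2
    · exact (U.minFac_dvd).trans (Nat.ordCompl_dvd m 2)
theorem stmt_16 (a r : ℕ) (ha : 0 < a) (hr : 0 < r) (hodd : Odd r)
    (ha2 : ¬ ∃ s : ℕ, a + 1 = 2 ^ s)
    (hτ : ∃ τ : ℕ, 0 < τ ∧ ∃ p₀ pτ : ℕ, p₀.Prime ∧ pτ.Prime ∧ p₀ ≠ pτ ∧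
      p₀ ∣ a ^ 2 ^ τ - 1 ∧ pτ ∣ a ^ 2 ^ τ - 1 ∧
      ∀ m : ℕ, m < τ → ¬ p₀ ∣ a ^ 2 ^ m - 1 ∧ ¬ pτ ∣ a ^ 2 ^ m - 1) :
    {k : ℕ | 0 < k ∧
      Nat.gcd (Nat.choose k r - 1) (a - 1) = 1 ∧
      (¬ ∃ e : ℕ, Nat.choose k r = a ^ e) ∧
      ∀ n : ℕ, 0 < n →
        1 < Nat.choose k r * a ^ n - 1 ∧
        ¬ Nat.Prime (Nat.choose k r * a ^ n - 1)}.Infinite := by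
  classical
  obtain ⟨τ, hτpos, p₀, pτ, hp₀, hpτ, hne, hd₀, hdτ, hnd⟩ := hτ
  have ha2' : 2 ≤ a := by
    rcases Nat.lt_or_ge a 2 with h | h
    · interval_cases a
      exact absurd ⟨1, rfl⟩ ha2
    · exact h
  -- basic powers
  have hpow2 : ∀ m : ℕ, 2 ≤ a ^ (2 ^ m) := fun m =>
    le_trans ha2' (Nat.le_self_pow (by positivity) a)
  -- p₀, pτ are odd
  have hodd_of : ∀ p : ℕ, p.Prime → ¬ p ∣ a ^ 2 ^ 0 - 1 → p ∣ a ^ 2 ^ τ - 1 → p ≠ 2 := by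
    intro p hp h0 hτd hp2
    subst hp2
    rcases Nat.even_or_odd a with hae | hao
    · have h2 : 2 ∣ a ^ 2 ^ τ := dvd_pow (even_iff_two_dvd.mp hae) (by positivity)
      have := hpow2 τ
      omega
    · have : 2 ∣ a - 1 := by obtain ⟨c, hc⟩ := hao; omega
      apply h0
      simpa using this
  have hp₀2 : p₀ ≠ 2 := hodd_of p₀ hp₀ (hnd 0 hτpos).1 hd₀
  have hpτ2 : pτ ≠ 2 := hodd_of pτ hpτ (hnd 0 hτpos).2 hdτ
  -- pτ divides a^(2^(τ-1)) + 1
  have hpτ_dvd : pτ ∣ a ^ (2 ^ (τ - 1)) + 1 := by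
    have hx2 : 2 ≤ a ^ (2 ^ (τ - 1)) := hpow2 _
    obtain ⟨y, hy⟩ : ∃ y, a ^ (2 ^ (τ - 1)) = y + 2 := ⟨a ^ (2 ^ (τ - 1)) - 2, by omega⟩
    have hfact : a ^ 2 ^ τ - 1 = (y + 3) * (y + 1) := by
      have hτ' : τ = (τ - 1) + 1 := by omega
      rw [hτ', pow_two_pow_succ, hy]
      have h1 : (y + 2) ^ 2 = (y + 3) * (y + 1) + 1 := by ring
      omega
    rw [hfact] at hdτ
    rcases (Nat.Prime.dvd_mul hpτ).mp hdτ with h | h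
    · have h3 : y + 2 + 1 = y + 3 := by omega
      rw [hy, h3]; exact h
    · exfalso
      apply (hnd (τ - 1) (by omega)).2
      have h1 : a ^ 2 ^ (τ - 1) - 1 = y + 1 := by omega
      rw [h1]; exact h
  -- covering moduli
  set W := ∏ m ∈ Finset.range (τ - 1), (a ^ (2 ^ m) + 1) with hW
  set V := W * (a - 1) with hV
  have hWpos : 0 < W := Finset.prod_pos (fun m _ => by positivity)
  have hVpos : 0 < V := Nat.mul_pos hWpos (by omega)
  set U := ordCompl[2] V with hUdef
  have hUdvd : U ∣ V := Nat.ordCompl_dvd V 2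
  have hU2 : ¬ 2 ∣ U := Nat.not_dvd_ordCompl Nat.prime_two hVpos.ne'
  have hUpos : 0 < U := Nat.ordCompl_pos 2 hVpos.ne'
  have hodd_dvd_U : ∀ q : ℕ, q.Prime → q ≠ 2 → q ∣ V → q ∣ U := by
    intro q hq hq2 hqV
    have hfac : 2 ^ (V.factorization 2) * U = V := Nat.ordProj_mul_ordCompl_eq_self V 2
    have hcop : Nat.Coprime q (2 ^ (V.factorization 2)) :=
      Nat.Coprime.pow_right _ ((hq.coprime_iff_not_dvd).mpr
        (fun h => hq2 ((Nat.prime_dvd_prime_iff_eq hq Nat.prime_two).mp h)))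
    refine hcop.dvd_of_dvd_mul_left ?_
    rw [hfac]
    exact hqV
  set A := (U * pτ) ^ (r ! + 1) with hA
  have hApos : 0 < A := pow_pos (Nat.mul_pos hUpos hpτ.pos) _
  -- every prime divisor of V divides some a^(2^m)-1 with m < τ
  have hVd : ∀ q : ℕ, q.Prime → q ∣ V → ∃ m, m < τ ∧ q ∣ a ^ 2 ^ m - 1 := by
    intro q hq hqV
    rcases (Nat.Prime.dvd_mul hq).mp (hV ▸ hqV) with h | h
    · obtain ⟨m, hm, hdd⟩ := (Prime.dvd_finset_prod_iff hq.prime _).mp (hW ▸ h)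
      refine ⟨m + 1, by have := Finset.mem_range.mp hm; omega, ?_⟩
      have : (a ^ (2 ^ m) + 1) ∣ a ^ 2 ^ (m + 1) - 1 := by
        rw [pow_two_pow_succ]
        exact succ_dvd_sq_sub_one _
      exact hdd.trans this
    · exact ⟨0, hτpos, by simpa using h⟩
  have hp₀U : ¬ p₀ ∣ U * pτ := by
    intro h
    rcases hp₀.dvd_mul.mp h with h | h
    · obtain ⟨m, hm, hdd⟩ := hVd p₀ hp₀ (h.trans hUdvd)
      exact (hnd m hm).1 hdd
    · exact hne ((Nat.prime_dvd_prime_iff_eq hp₀ hpτ).mp h)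
  have hcopA : Nat.Coprime A (p₀ ^ (r ! + 1)) :=
    Nat.Coprime.pow _ _ (((hp₀.coprime_iff_not_dvd).mpr hp₀U).symm)
  have h2Upτ : ¬ 2 ∣ U * pτ := by
    intro h
    rcases Nat.prime_two.dvd_mul.mp h with h | h
    · exact hU2 h
    · exact hpτ2 (((Nat.prime_dvd_prime_iff_eq Nat.prime_two hpτ).mp h).symm)
  have hcop2 : Nat.Coprime (2 ^ (r ! + 1)) (A * p₀ ^ (r ! + 1)) := by
    apply Nat.Coprime.mul_right
    · exact Nat.Coprime.pow _ _ ((Nat.prime_two.coprime_iff_not_dvd).mpr h2Upτ)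
    · exact Nat.Coprime.pow _ _ ((Nat.prime_two.coprime_iff_not_dvd).mpr
        (fun h => hp₀2 (((Nat.prime_dvd_prime_iff_eq Nat.prime_two hp₀).mp h).symm)))
  set c₂ := if 2 ∣ a then 2 ^ (r ! + 1) - 1 else 0 with hc₂
  obtain ⟨k₁, hk₁A, hk₁p₀⟩ := Nat.chineseRemainder hcopA (A - 1) r
  obtain ⟨k₀, hk₀2, hk₀1⟩ := Nat.chineseRemainder hcop2 c₂ k₁
  set M := 2 ^ (r ! + 1) * (A * p₀ ^ (r ! + 1)) with hM
  have hMpos : 0 < M := Nat.mul_pos (pow_pos (by norm_num) _) (Nat.mul_pos hApos (pow_pos hp₀.pos _))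
  refine Set.infinite_of_injective_forall_mem (f := fun t : ℕ => k₀ + M * (t + r + 2)) ?_ ?_
  · intro x y hxy
    simp only at hxy
    have := Nat.eq_of_mul_eq_mul_left hMpos (Nat.add_left_cancel hxy)
    omega
  · intro t
    simp only [Set.mem_setOf_eq]
    set k := k₀ + M * (t + r + 2) with hk
    have hkk₀ : k ≡ k₀ [MOD M] := Nat.add_mul_mod_self_left k₀ M (t + r + 2)
    have hk2 : k ≡ c₂ [MOD 2 ^ (r ! + 1)] := (hkk₀.of_dvd (dvd_mul_right _ _)).trans hk₀2
    have hkAp : k ≡ k₁ [MOD A * p₀ ^ (r ! + 1)] := (hkk₀.of_dvd (dvd_mul_left _ _)).trans hk₀1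
    have hkA : k ≡ A - 1 [MOD A] := (hkAp.of_dvd (dvd_mul_right _ _)).trans hk₁A
    have hkp₀ : k ≡ r [MOD p₀ ^ (r ! + 1)] := (hkAp.of_dvd (dvd_mul_left _ _)).trans hk₁p₀
    have hkbig : r + 2 ≤ k := by
      have h1 : t + r + 2 ≤ M * (t + r + 2) := Nat.le_mul_of_pos_left _ hMpos
      omega
    set s := k.choose r with hs
    have hs3 : 3 ≤ s := by
      have h1 : Nat.choose (r + 2) r ≤ s := Nat.choose_le_choose r hkbig
      have h2 : Nat.choose (r + 2) r = Nat.choose (r + 2) 2 := by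
        conv_lhs => rw [← Nat.choose_symm (by omega : r ≤ r + 2)]
        congr 1
        omega
      have h3 : Nat.choose (r + 2) 2 = (r + 2) * (r + 2 - 1) / 2 := Nat.choose_two_right _
      have h4 : 6 ≤ (r + 2) * (r + 2 - 1) := by
        calc 6 = 3 * 2 := by norm_num
        _ ≤ (r + 2) * (r + 2 - 1) := Nat.mul_le_mul (by omega) (by omega)
      omega
    -- master congruence : s ≡ -1 mod every prime divisor of U * pτ
    have hmain : ∀ q : ℕ, q.Prime → q ∣ U * pτ → (s : ℤ) ≡ -1 [ZMOD (q : ℤ)] := by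
      intro q hq hqd
      apply chooseA q r k hq hodd
      have hdvdA : q ^ (r ! + 1) ∣ A := by rw [hA]; exact pow_dvd_pow_of_dvd hqd _
      have hcast : ((k : ℕ) : ZMod (q ^ (r ! + 1))) = ((A - 1 : ℕ) : ZMod (q ^ (r ! + 1))) :=
        (ZMod.natCast_eq_natCast_iff _ _ _).mpr (hkA.of_dvd hdvdA)
      rw [hcast]
      obtain ⟨d, hd⟩ := hdvdA
      rw [Nat.cast_sub hApos, hd, Nat.cast_mul, ZMod.natCast_self, zero_mul, Nat.cast_one,
        zero_sub]
    have hmainp₀ : (s : ℤ) ≡ 1 [ZMOD (p₀ : ℤ)] := by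
      apply chooseB p₀ r k hp₀
      exact (ZMod.natCast_eq_natCast_iff _ _ _).mpr hkp₀
    have hs_even : ¬ 2 ∣ a → 2 ∣ s := by
      intro h2a
      have hc : c₂ = 0 := by rw [hc₂, if_neg h2a]
      have hcast : ((k : ℕ) : ZMod (2 ^ (r ! + 1))) = 0 := by
        have := (ZMod.natCast_eq_natCast_iff _ _ _).mpr (hc ▸ hk2)
        simpa using this
      have h0 := chooseC 2 r k Nat.prime_two hr hcast
      have : ((2 : ℕ) : ℤ) ∣ (s : ℤ) := (Int.modEq_zero_iff_dvd).mp h0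
      exact_mod_cast this
    have hs_odd : 2 ∣ a → ¬ 2 ∣ s := by
      intro h2a h2s
      have hc : c₂ = 2 ^ (r ! + 1) - 1 := by rw [hc₂, if_pos h2a]
      have hcast : ((k : ℕ) : ZMod (2 ^ (r ! + 1))) = -1 := by
        have h1 := (ZMod.natCast_eq_natCast_iff _ _ _).mpr (hc ▸ hk2)
        rw [h1, Nat.cast_sub (Nat.one_le_two_pow), ZMod.natCast_self, Nat.cast_one, zero_sub]
      have hA1 := chooseA 2 r k Nat.prime_two hodd hcast
      have h1 : ((2:ℕ) : ℤ) ∣ (s : ℤ) - (-1) := Int.ModEq.dvd hA1.symm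
      have h2 : ((2:ℕ) : ℤ) ∣ (s : ℤ) := Int.natCast_dvd_natCast.mpr h2s
      obtain ⟨c1, hc1⟩ := h1
      obtain ⟨c2, hc2⟩ := h2
      omega
    refine ⟨by omega, ?_, ?_, ?_⟩
    · -- gcd condition
      by_contra hg
      obtain ⟨ℓ, hℓp, hℓd⟩ := Nat.exists_prime_and_dvd hg
      have hd1 : ℓ ∣ s - 1 := hℓd.trans (Nat.gcd_dvd_left _ _)
      have hd2 : ℓ ∣ a - 1 := hℓd.trans (Nat.gcd_dvd_right _ _)
      rcases eq_or_ne ℓ 2 with rfl | hℓ2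
      · have h2a : ¬ 2 ∣ a := by
          intro h
          obtain ⟨c, hc⟩ := h; obtain ⟨d, hdd⟩ := hd2; omega
        have h2s := hs_even h2a
        obtain ⟨c, hc⟩ := h2s; obtain ⟨d, hdd⟩ := hd1; omega
      · have hℓV : ℓ ∣ V := by rw [hV]; exact hd2.mul_left W
        have hℓU : ℓ ∣ U := hodd_dvd_U ℓ hℓp hℓ2 hℓV
        have hcon := hmain ℓ hℓp (hℓU.trans (dvd_mul_right U pτ))
        have h1 : (ℓ:ℤ) ∣ (s:ℤ) + 1 := by
          have hdd := Int.ModEq.dvd hcon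
          have h2 : ((s:ℤ) + 1) = -((-1) - (s:ℤ)) := by ring
          rw [h2]; exact dvd_neg.mpr hdd
        have h2 : (ℓ:ℤ) ∣ (s:ℤ) - 1 := by
          have h3 := Int.natCast_dvd_natCast.mpr hd1
          rwa [Nat.cast_sub (by omega : 1 ≤ s)] at h3
        have h3 : (ℓ:ℤ) ∣ 2 := by
          have h4 := dvd_sub h1 h2
          simpa using h4
        have h5 : ℓ ∣ 2 := by exact_mod_cast h3
        exact hℓ2 ((Nat.prime_dvd_prime_iff_eq hℓp Nat.prime_two).mp h5)
    · -- not a power of a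
      rintro ⟨e, he⟩
      by_cases h2a : 2 ∣ a
      · have hso := hs_odd h2a
        rcases Nat.eq_zero_or_pos e with rfl | he1
        · rw [pow_zero] at he; omega
        · have h1 : 2 ∣ a ^ e := dvd_pow h2a he1.ne'
          rw [← he] at h1; exact hso h1
      · have hse := hs_even h2a
        have h1 : ¬ 2 ∣ a ^ e := fun h => h2a (Nat.Prime.dvd_of_dvd_pow Nat.prime_two h)
        rw [← he] at h1; exact h1 hse
    · -- compositeness
      intro n hn
      have han : 2 ≤ a ^ n := le_trans ha2' (Nat.le_self_pow hn.ne' a)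
      have hsan : 2 * s ≤ s * a ^ n := by
        calc 2 * s = s * 2 := by ring
        _ ≤ s * a ^ n := Nat.mul_le_mul_left s han
      refine ⟨by omega, ?_⟩
      obtain ⟨q, hq, hqdvd, hqle⟩ : ∃ q : ℕ, q.Prime ∧ (q:ℤ) ∣ (s:ℤ) * (a:ℤ) ^ n - 1 ∧ q ≤ s + 1 := by
        by_cases h2τ : 2 ^ τ ∣ n
        · refine ⟨p₀, hp₀, ?_, ?_⟩
          · obtain ⟨w, rfl⟩ := h2τ
            have h1 : ((a:ℤ) ^ 2 ^ τ) ≡ 1 [ZMOD (p₀:ℤ)] := by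
              have h2 := Int.natCast_dvd_natCast.mpr hd₀
              rw [Nat.cast_sub (by have := hpow2 τ; omega : 1 ≤ a ^ 2 ^ τ)] at h2
              push_cast at h2
              exact (Int.modEq_iff_dvd.mpr h2).symm
            have h2 : ((a:ℤ) ^ (2 ^ τ * w)) ≡ 1 [ZMOD (p₀:ℤ)] := by
              rw [pow_mul]
              calc ((a:ℤ) ^ 2 ^ τ) ^ w ≡ 1 ^ w [ZMOD (p₀:ℤ)] := h1.pow w
              _ = 1 := one_pow w
            have h4 : (s:ℤ) * (a:ℤ) ^ (2 ^ τ * w) ≡ 1 [ZMOD (p₀:ℤ)] := by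
              have h5 := hmainp₀.mul h2
              simpa using h5
            exact Int.ModEq.dvd h4.symm
          · have h1 : (p₀:ℤ) ∣ (s:ℤ) - 1 := Int.ModEq.dvd hmainp₀.symm
            have hs3' : (3:ℤ) ≤ (s:ℤ) := by exact_mod_cast hs3
            have h2 := Int.le_of_dvd (by omega) h1
            omega
        · obtain ⟨j, u, hu2, hnju⟩ := Nat.exists_eq_pow_mul_and_not_dvd hn.ne' 2 (by norm_num)
          have hjτ : j < τ := by
            by_contra hge
            push_neg at hge
            exact h2τ ((pow_dvd_pow 2 hge).trans ⟨u, hnju⟩)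
          obtain ⟨q, hq, hqUpτ, hqpow⟩ :
              ∃ q : ℕ, q.Prime ∧ q ∣ U * pτ ∧ q ∣ a ^ (2 ^ j) + 1 := by
            rcases eq_or_ne j (τ - 1) with rfl | hjne
            · exact ⟨pτ, hpτ, dvd_mul_left pτ U, hpτ_dvd⟩
            · obtain ⟨q, hq, hqodd, hqd⟩ := odd_prime_factor a j ha2' ha2
              have hjlt : j < τ - 1 := by omega
              have hqW : q ∣ W := by
                rw [hW]
                exact hqd.trans (Finset.dvd_prod_of_mem _ (Finset.mem_range.mpr hjlt))
              have hqV : q ∣ V := by rw [hV]; exact hqW.mul_right _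
              have hq2 : q ≠ 2 := by rcases hqodd with ⟨c, hc⟩; omega
              exact ⟨q, hq, (hodd_dvd_U q hq hq2 hqV).trans (dvd_mul_right U pτ), hqd⟩
          refine ⟨q, hq, ?_, ?_⟩
          · have hs1 := hmain q hq hqUpτ
            have hb : ((a:ℤ) ^ 2 ^ j) ≡ -1 [ZMOD (q:ℤ)] := by
              have h2 := Int.natCast_dvd_natCast.mpr hqpow
              push_cast at h2
              exact (Int.modEq_iff_dvd.mpr (by simpa [sub_neg_eq_add] using h2)).symm
            have hbn : ((a:ℤ) ^ n) ≡ -1 [ZMOD (q:ℤ)] := by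
              rw [hnju, pow_mul]
              have hu : Odd u := Nat.odd_iff.mpr (by omega)
              calc ((a:ℤ) ^ 2 ^ j) ^ u ≡ (-1 : ℤ) ^ u [ZMOD (q:ℤ)] := hb.pow u
              _ = -1 := hu.neg_one_pow
            have h4 : (s:ℤ) * (a:ℤ) ^ n ≡ 1 [ZMOD (q:ℤ)] := by
              have h5 := hs1.mul hbn
              simpa using h5
            exact Int.ModEq.dvd h4.symm
          · have h1 : (q:ℤ) ∣ (s:ℤ) + 1 := by
              have hdd := Int.ModEq.dvd (hmain q hq hqUpτ)
              have h2 : ((s:ℤ) + 1) = -((-1) - (s:ℤ)) := by ring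
              rw [h2]; exact dvd_neg.mpr hdd
            have h3 : q ∣ s + 1 := by exact_mod_cast h1
            exact Nat.le_of_dvd (by omega) h3
      have hNdvd : q ∣ s * a ^ n - 1 := by
        have hge : 1 ≤ s * a ^ n := by omega
        have hcast : ((s * a ^ n - 1 : ℕ) : ℤ) = (s:ℤ) * (a:ℤ) ^ n - 1 := by
          rw [Nat.cast_sub hge]; push_cast; ring
        exact Int.natCast_dvd_natCast.mp (by rw [hcast]; exact hqdvd)
      intro hNp
      rcases (Nat.Prime.eq_one_or_self_of_dvd hNp q hNdvd) with h | h
      · exact hq.ne_one h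
      · omega
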